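/- (Proposition 4, white part.) Let c ≥ 1 be an integer. The 𝔽₂-dimension of the polarized kernel ker WB of the c×c square grid satisfies 2·dim ker WB_{c,c} = c − (c mod 2). -/
import Mathlib


/-- Membership in the m×n rectangular grid {0,…,m−1}×{0,…,n−1}. -/
def InGrid (m n i j : ℤ) : Prop :=
  0 ≤ i ∧ i ≤ m - 1 ∧ 0 ≤ j ∧ j ≤ n - 1


instance (m n i j : ℤ) : Decidable (InGrid m n i j) :=
  inferInstanceAs (Decidable (_ ∧ _ ∧ _ ∧ _))

/-- A function on ℤ×ℤ with values in ZMod 2, vanishing outside the m×n grid,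
is harmonic if the sum of its values at the four neighbours of any grid point is 0. -/
def IsHarmonic (m n : ℤ) (v : ℤ → ℤ → ZMod 2) : Prop :=
  (∀ i j : ℤ, ¬ InGrid m n i j → v i j = 0) ∧
  (∀ i j : ℤ, InGrid m n i j →
    v (i - 1) j + v (i + 1) j + v i (j - 1) + v i (j + 1) = 0)

/-- The 𝔽₂-vector space of harmonic functions on the m×n grid. -/
def harm (m n : ℤ) : Submodule (ZMod 2) (ℤ → ℤ → ZMod 2) where
  carrier := {v | IsHarmonic m n v}
  zero_mem' := ⟨fun _ _ _ => rfl, fun _ _ _ => by simp⟩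
  add_mem' := by
    rintro a b ⟨ha0, ha1⟩ ⟨hb0, hb1⟩
    refine ⟨fun i j h => ?_, fun i j h => ?_⟩
    · simp [Pi.add_apply, ha0 i j h, hb0 i j h]
    · have h1 := ha1 i j h
      have h2 := hb1 i j h
      simp only [Pi.add_apply]
      linear_combination h1 + h2
  smul_mem' := by
    rintro c a ⟨ha0, ha1⟩
    refine ⟨fun i j h => ?_, fun i j h => ?_⟩
    · simp [Pi.smul_apply, ha0 i j h]
    · have h1 := ha1 i j h
      simp only [Pi.smul_apply, smul_eq_mul]
      linear_combination c * h1

/-- Functions vanishing on a prescribed set of points. -/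
def vanishOn (P : ℤ → ℤ → Prop) : Submodule (ZMod 2) (ℤ → ℤ → ZMod 2) where
  carrier := {v | ∀ i j : ℤ, P i j → v i j = 0}
  zero_mem' := fun _ _ _ => rfl
  add_mem' := by
    intro a b ha hb i j h
    simp [Pi.add_apply, ha i j h, hb i j h]
  smul_mem' := by
    intro c a ha i j h
    simp [Pi.smul_apply, ha i j h]

/-- The polarized kernel ker BW: harmonic functions vanishing at white points
(points with i+j odd). -/
def kerBW (m n : ℤ) : Submodule (ZMod 2) (ℤ → ℤ → ZMod 2) :=
  harm m n ⊓ vanishOn (fun i j => Odd (i + j))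

/-- The polarized kernel ker WB: harmonic functions vanishing at black points
(points with i+j even). -/
def kerWB (m n : ℤ) : Submodule (ZMod 2) (ℤ → ℤ → ZMod 2) :=
  harm m n ⊓ vanishOn (fun i j => Even (i + j))



/-- folding about c-1 -/
def fold (c : ℕ) (x : ℤ) : ℤ := if (c : ℤ) ≤ x then 2*(c:ℤ) - 2 - x else x

def Gf (c : ℕ) (a : ℕ → ZMod 2) (x : ℤ) : ZMod 2 :=
  if Odd x ∧ 1 ≤ fold c x then a ((fold c x - 1) / 2).toNat else 0

def Hf (c : ℕ) (a : ℕ → ZMod 2) (x : ℤ) : ZMod 2 := Gf c a (|x| - 2)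

def wf (c : ℕ) (a : ℕ → ZMod 2) (i j : ℤ) : ZMod 2 := Gf c a (i + j) + Hf c a (i - j)

lemma Gf_even (c a) {x : ℤ} (h : Even x) : Gf c a x = 0 := by
  rw [Gf, if_neg]
  simp [(Int.not_odd_iff_even (n:=x)).mpr h]

lemma Gf_refl (c : ℕ) (a) {x : ℤ} (h : (c:ℤ) ≤ x) : Gf c a x = Gf c a (2*(c:ℤ) - 2 - x) := by
  have h1 : fold c x = 2*(c:ℤ) - 2 - x := if_pos h
  have h2 : fold c (2*(c:ℤ) - 2 - x) = 2*(c:ℤ) - 2 - x := if_neg (by omega)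
  have h3 : Odd x ↔ Odd (2*(c:ℤ) - 2 - x) := by
    simp only [Int.odd_iff]; omega
  rw [Gf, Gf, h1, h2]
  simp only [h3]

lemma Hf_eq (c a) {x : ℤ} (h : 0 ≤ x) : Hf c a x = Gf c a (x - 2) := by
  rw [Hf, abs_of_nonneg h]

lemma Hf_eq' (c a) {x : ℤ} (h : x ≤ 0) : Hf c a x = Gf c a (-x - 2) := by
  rw [Hf, abs_of_nonpos h]

lemma add_self' (x : ZMod 2) : x + x = 0 := CharTwo.add_self_eq_zero x

lemma w_bottom (c a) {i : ℤ} (hi : 0 ≤ i) : wf c a i (-1) = 0 := by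
  rw [wf, Hf_eq c a (by omega)]
  have : i - -1 - 2 = i + -1 := by ring
  rw [this, add_self']

lemma w_left (c a) {j : ℤ} (hj : 0 ≤ j) : wf c a (-1) j = 0 := by
  rw [wf, Hf_eq' c a (by omega)]
  have : -(-1 - j) - 2 = -1 + j := by ring
  rw [this, add_self']

lemma w_top (c : ℕ) (a : ℕ → ZMod 2) {i : ℤ} (hi : 0 ≤ i) (hi' : i ≤ c) : wf c a i c = 0 := by
  rw [wf, Hf_eq' c a (by omega), Gf_refl c a (x := i + c) (by omega)]
  have : 2*(c:ℤ) - 2 - (i + c) = -(i - c) - 2 := by ring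
  rw [this, add_self']

lemma w_right (c : ℕ) (a : ℕ → ZMod 2) {j : ℤ} (hj : 0 ≤ j) (hj' : j ≤ c) : wf c a (c:ℤ) j = 0 := by
  rw [wf, Hf_eq c a (by omega), Gf_refl c a (x := (c:ℤ) + j) (by omega)]
  have : 2*(c:ℤ) - 2 - ((c:ℤ) + j) = (c:ℤ) - j - 2 := by ring
  rw [this, add_self']

lemma wf_black (c a) {i j : ℤ} (h : Even (i + j)) : wf c a i j = 0 := by
  rw [wf, Gf_even c a h, Hf]
  have : Even (|i - j| - 2) := by
    rcases abs_cases (i - j) with ⟨h1, _⟩ | ⟨h1, _⟩ <;> rw [h1] <;>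
      · simp only [Int.even_iff] at h ⊢; omega
  rw [Gf_even c a this, add_zero]

lemma wsum (c : ℕ) (a : ℕ → ZMod 2) (i j : ℤ) :
    wf c a (i-1) j + wf c a (i+1) j + wf c a i (j-1) + wf c a i (j+1) = 0 := by
  have key : ∀ g1 g2 h1 h2 : ZMod 2, (g1+h1) + (g2+h2) + (g1+h2) + (g2+h1) = 0 := by
    intro g1 g2 h1 h2
    have e : (g1+h1) + (g2+h2) + (g1+h2) + (g2+h1)
        = (g1+g1) + ((g2+g2) + ((h1+h1) + (h2+h2))) := by ring
    rw [e, add_self', add_self', add_self', add_self']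
    simp
  have e1 : i - 1 + j = i + j - 1 := by ring
  have e2 : i + 1 + j = i + j + 1 := by ring
  have e3 : i - 1 - j = i - j - 1 := by ring
  have e4 : i + 1 - j = i - j + 1 := by ring
  have e5 : i - (j-1) = i - j + 1 := by ring
  have e6 : i - (j+1) = i - j - 1 := by ring
  have e7 : i + (j-1) = i + j - 1 := by ring
  have e8 : i + (j+1) = i + j + 1 := by ring
  rw [wf, wf, wf, wf, e1, e2, e3, e4, e5, e6, e7, e8]
  exact key _ _ _ _

def vf (c : ℕ) (a : ℕ → ZMod 2) (i j : ℤ) : ZMod 2 :=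
  if InGrid c c i j then wf c a i j else 0


lemma vf_mem (c : ℕ) (a : ℕ → ZMod 2) : vf c a ∈ kerWB (c:ℤ) (c:ℤ) := by
  have hnbr : ∀ i j i' j' : ℤ, InGrid c c i j →
      (i' = i - 1 ∧ j' = j ∨ i' = i + 1 ∧ j' = j ∨ i' = i ∧ j' = j - 1 ∨ i' = i ∧ j' = j + 1) →
      vf c a i' j' = wf c a i' j' := by
    intro i j i' j' hg hn
    rw [vf]
    by_cases h : InGrid c c i' j'
    · rw [if_pos h]
    · rw [if_neg h]
      obtain ⟨h1, h2, h3, h4⟩ := hg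
      rw [InGrid] at h
      push_neg at h
      -- the out-of-grid neighbour is on one of the four sides
      rcases hn with ⟨e1, e2⟩ | ⟨e1, e2⟩ | ⟨e1, e2⟩ | ⟨e1, e2⟩ <;> subst e1 <;> subst e2
      · have : i - 1 = -1 := by omega
        rw [this, w_left c a h3]
      · have : i + 1 = (c:ℤ) := by omega
        rw [this, w_right c a h3 (by omega)]
      · have : j - 1 = -1 := by omega
        rw [this, w_bottom c a h1]
      · have : j + 1 = (c:ℤ) := by omega
        rw [this, w_top c a h1 (by omega)]
  refine Submodule.mem_inf.mpr ⟨?_, ?_⟩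
  · show IsHarmonic c c (vf c a)
    refine ⟨fun i j h => if_neg h, fun i j hg => ?_⟩
    rw [hnbr i j _ _ hg (by tauto), hnbr i j _ _ hg (by tauto),
        hnbr i j _ _ hg (by tauto), hnbr i j _ _ hg (by tauto)]
    exact wsum c a i j
  · show ∀ i j : ℤ, Even (i + j) → vf c a i j = 0
    intro i j h
    rw [vf]
    by_cases hg : InGrid c c i j
    · rw [if_pos hg, wf_black c a h]
    · rw [if_neg hg]




lemma Gf_neg_one (c : ℕ) (a : ℕ → ZMod 2) : Gf c a (-1) = 0 := by
  rw [Gf, if_neg]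
  rintro ⟨-, h⟩
  rw [fold, if_neg (by omega)] at h
  omega

lemma Gf_small (c : ℕ) (a : ℕ → ZMod 2) {x : ℤ} (h1 : 1 ≤ x) (h2 : x < (c:ℤ))
    (ho : Odd x) : Gf c a x = a ((x - 1) / 2).toNat := by
  have hf : fold c x = x := if_neg (by omega)
  rw [Gf, hf, if_pos ⟨ho, h1⟩]

lemma vf_row0 (c : ℕ) (a : ℕ → ZMod 2) (k : ℕ) (hk : k < c / 2) :
    vf c a (2*(k:ℤ)+1) 0 = a k + Gf c a (2*(k:ℤ)-1) := by
  have hg : InGrid c c (2*(k:ℤ)+1) 0 := ⟨by omega, by omega, by omega, by omega⟩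
  rw [vf, if_pos hg, wf]
  have e1 : 2*(k:ℤ)+1 + 0 = 2*(k:ℤ)+1 := by ring
  have e2 : 2*(k:ℤ)+1 - 0 = 2*(k:ℤ)+1 := by ring
  rw [e1, e2, Hf_eq c a (by omega)]
  have e3 : 2*(k:ℤ)+1 - 2 = 2*(k:ℤ)-1 := by ring
  have e4 : ((2*(k:ℤ)+1 - 1) / 2).toNat = k := by omega
  rw [e3, Gf_small c a (by omega) (by omega) ⟨(k:ℤ), by ring⟩, e4]

lemma kerWB_rows (c : ℕ) (v : ℤ → ℤ → ZMod 2) (hv : v ∈ kerWB (c:ℤ) (c:ℤ))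
    (h0 : ∀ i : ℤ, v i 0 = 0) : ∀ n : ℕ, ∀ i : ℤ, v i (n : ℤ) = 0 := by
  have hharm : IsHarmonic c c v := (Submodule.mem_inf.mp hv).1
  intro n
  induction n using Nat.strong_induction_on with
  | _ n ih =>
    match n with
    | 0 => exact fun i => h0 i
    | Nat.succ k =>
      intro i
      by_cases hg : InGrid c c i (((k:ℕ) : ℤ) + 1)
      · have hgk : InGrid c c i (k : ℤ) := by
          obtain ⟨a1, a2, a3, a4⟩ := hg
          exact ⟨a1, a2, by omega, by omega⟩
        have hh := hharm.2 i (k : ℤ) hgk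
        have hm1 : v i ((k:ℤ) - 1) = 0 := by
          rcases Nat.eq_zero_or_pos k with hk | hk
          · subst hk
            apply hharm.1
            rintro ⟨-, -, h3, -⟩
            omega
          · have e : (k:ℤ) - 1 = ((k-1 : ℕ) : ℤ) := by omega
            rw [e]
            exact ih (k-1) (by omega) i
        have hr1 : v (i-1) (k:ℤ) = 0 := ih k (by omega) _
        have hr2 : v (i+1) (k:ℤ) = 0 := ih k (by omega) _
        rw [hr1, hr2, hm1] at hh
        have e : ((k+1 : ℕ) : ℤ) = (k:ℤ) + 1 := by push_cast; ring
        rw [e]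
        simpa using hh
      · apply hharm.1
        have e : ((k+1 : ℕ) : ℤ) = ((k:ℕ) : ℤ) + 1 := by push_cast; ring
        rw [e]
        exact hg

lemma kerWB_inj (c : ℕ) (v : ℤ → ℤ → ZMod 2) (hv : v ∈ kerWB (c:ℤ) (c:ℤ))
    (h0 : ∀ k : ℕ, k < c / 2 → v (2*(k:ℤ)+1) 0 = 0) : v = 0 := by
  have hharm : IsHarmonic c c v := (Submodule.mem_inf.mp hv).1
  have hblack : ∀ i j : ℤ, Even (i + j) → v i j = 0 := (Submodule.mem_inf.mp hv).2
  have hrow0 : ∀ i : ℤ, v i 0 = 0 := by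
    intro i
    by_cases hpar : Even (i + 0)
    · exact hblack i 0 hpar
    · by_cases hg : InGrid c c i 0
      · obtain ⟨a1, a2, -, -⟩ := hg
        rw [Int.even_add] at hpar
        simp [Int.even_iff, Int.odd_iff] at hpar
        set n := i.toNat with hn
        have hi : i = (n : ℤ) := by omega
        have hodd : n % 2 = 1 := by omega
        have e : i = 2*((n/2 : ℕ) : ℤ) + 1 := by push_cast; omega
        rw [e]
        apply h0
        omega
      · exact hharm.1 i 0 hg
  have hrows := kerWB_rows c v hv hrow0
  funext i j
  show v i j = 0
  by_cases hj : 0 ≤ j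
  · have e : j = ((j.toNat : ℕ) : ℤ) := by omega
    rw [e]
    exact hrows j.toNat i
  · apply hharm.1
    rintro ⟨-, -, h3, -⟩
    omega

def bexts (m : ℕ) (b : Fin m → ZMod 2) (i : ℕ) : ZMod 2 :=
  if h : i < m then b ⟨i, h⟩ else 0

def abuild (m : ℕ) (b : Fin m → ZMod 2) (k : ℕ) : ZMod 2 :=
  ∑ i ∈ Finset.range (k+1), bexts m b i

lemma key2 (x y : ZMod 2) : (x + y) + x = y := by
  have e : (x + y) + x = (x + x) + y := by ring
  rw [e, add_self', zero_add]

lemma abuild_row0 (c : ℕ) (b : Fin (c/2) → ZMod 2) (k : ℕ) (hk : k < c/2) :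
    vf c (abuild (c/2) b) (2*(k:ℤ)+1) 0 = b ⟨k, hk⟩ := by
  rw [vf_row0 c _ k hk]
  rcases Nat.eq_zero_or_pos k with h0 | h0
  · subst h0
    have e : 2*((0:ℕ):ℤ) - 1 = -1 := by norm_num
    rw [e, Gf_neg_one, add_zero]
    show abuild (c/2) b 0 = _
    rw [abuild, Finset.sum_range_one, bexts, dif_pos hk]
  · have e1 : 1 ≤ 2*(k:ℤ) - 1 := by omega
    have e2 : 2*(k:ℤ) - 1 < (c:ℤ) := by omega
    rw [Gf_small c _ e1 e2 ⟨(k:ℤ) - 1, by ring⟩]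
    have e3 : ((2*(k:ℤ) - 1 - 1)/2).toNat = k - 1 := by omega
    rw [e3]
    have e4 : abuild (c/2) b k = abuild (c/2) b (k-1) + bexts (c/2) b k := by
      rw [abuild, abuild]
      have : k - 1 + 1 = k := by omega
      rw [this, Finset.sum_range_succ]
    rw [e4, key2, bexts, dif_pos hk]

theorem finrank_kerWB (c : ℕ) :
    Module.finrank (ZMod 2) (kerWB (c : ℤ) (c : ℤ)) = c / 2 := by
  let φ : kerWB (c:ℤ) (c:ℤ) →ₗ[ZMod 2] (Fin (c/2) → ZMod 2) :=
    { toFun := fun v k => v.1 (2*((k:ℕ):ℤ)+1) 0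
      map_add' := fun x y => rfl
      map_smul' := fun r x => rfl }
  have hinj : Function.Injective φ := by
    rw [injective_iff_map_eq_zero]
    intro x hx
    apply Subtype.ext
    apply kerWB_inj c x.1 x.2
    intro k hk
    exact congrFun hx ⟨k, hk⟩
  have hsurj : Function.Surjective φ := by
    intro b
    refine ⟨⟨vf c (abuild (c/2) b), vf_mem c _⟩, ?_⟩
    funext k
    show vf c (abuild (c/2) b) (2*((k:ℕ):ℤ)+1) 0 = b k
    rw [abuild_row0 c b k.1 k.2]
  have := LinearEquiv.ofBijective φ ⟨hinj, hsurj⟩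
  rw [this.finrank_eq, Module.finrank_fintype_fun_eq_card, Fintype.card_fin]


/-- Proposition 4, white part: 2·dim ker WB of the c×c grid
equals c − (c mod 2). -/
theorem kerWB_square_dim (c : ℕ) (hc : 1 ≤ c) :
    2 * Module.finrank (ZMod 2) (kerWB (c : ℤ) (c : ℤ)) = c - c % 2 := by
  rw [finrank_kerWB c]
  omega
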